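/- Suppose a labelled open graph (G,I,O,λ) with I∩O = ∅ has a Pauli flow and |O| > |I|. Then there exists a subset O' ⊆ O with |O'| = |I| and a measurement labelling λ' such that (G,I,O',λ') has a Pauli flow. -/

import Mathlib

inductive MLabel | X | Y | Z | XY | XZ | YZ
deriving DecidableEq

open Finset

variable {V : Type} [Fintype V] [DecidableEq V]

/-- The odd neighbourhood of a set of vertices. -/
def Odds (G : SimpleGraph V) [DecidableRel G.Adj] (A : Finset V) : Finset V :=
  Finset.univ.filter fun v => Odd (A ∩ G.neighborFinset v).card

/-- Pauli flow conditions (P1)-(P9) for a labelled open graph. -/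
structure PauliFlow (G : SimpleGraph V) [DecidableRel G.Adj]
    (I O : Finset V) (lam : V → MLabel) (c : V → Finset V) (prec : V → V → Prop) : Prop where
  irrefl : ∀ u, ¬ prec u u
  trans : ∀ u v w, prec u v → prec v w → prec u w
  csub : ∀ u, u ∉ O → ∀ v ∈ c u, v ∉ I
  P1 : ∀ u, u ∉ O → ∀ v ∈ c u, v ∉ O → u ≠ v →
      lam v ≠ MLabel.X → lam v ≠ MLabel.Y → prec u v
  P2 : ∀ u, u ∉ O → ∀ v ∈ Odds G (c u), v ∉ O → u ≠ v →
      lam v ≠ MLabel.Y → lam v ≠ MLabel.Z → prec u v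
  P3 : ∀ u, u ∉ O → ∀ v, v ∉ O → ¬ prec u v → u ≠ v → lam v = MLabel.Y →
      (v ∈ c u ↔ v ∈ Odds G (c u))
  P4 : ∀ u, u ∉ O → lam u = MLabel.XY → u ∉ c u ∧ u ∈ Odds G (c u)
  P5 : ∀ u, u ∉ O → lam u = MLabel.XZ → u ∈ c u ∧ u ∈ Odds G (c u)
  P6 : ∀ u, u ∉ O → lam u = MLabel.YZ → u ∈ c u ∧ u ∉ Odds G (c u)
  P7 : ∀ u, u ∉ O → lam u = MLabel.X → u ∈ Odds G (c u)
  P8 : ∀ u, u ∉ O → lam u = MLabel.Z → u ∈ c u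
  P9 : ∀ u, u ∉ O → lam u = MLabel.Y → Xor' (u ∈ c u) (u ∈ Odds G (c u))

/-- Focussing conditions (F1)-(F3). -/
def Focussed (G : SimpleGraph V) [DecidableRel G.Adj]
    (O : Finset V) (lam : V → MLabel) (c : V → Finset V) : Prop :=
  ∀ v, v ∉ O →
    (∀ w, w ∉ O → w ≠ v → w ∈ c v →
      lam w = MLabel.XY ∨ lam w = MLabel.X ∨ lam w = MLabel.Y) ∧
    (∀ w, w ∉ O → w ≠ v → w ∈ Odds G (c v) →
      lam w = MLabel.XZ ∨ lam w = MLabel.YZ ∨ lam w = MLabel.Y ∨ lam w = MLabel.Z) ∧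
    (∀ w, w ∉ O → w ≠ v → lam w = MLabel.Y → (w ∈ c v ↔ w ∈ Odds G (c v)))

/-- The reduced adjacency matrix over F₂: rows indexed by non-outputs, columns by non-inputs. -/
def redAdj (G : SimpleGraph V) [DecidableRel G.Adj] (I O : Finset V) :
    Matrix {v : V // v ∉ O} {v : V // v ∉ I} (ZMod 2) :=
  Matrix.of fun v u => if G.Adj v.val u.val then 1 else 0


open Matrix

section RO

variable (G : SimpleGraph V) [DecidableRel G.Adj] (I : Finset V)

lemma zmod2_cases : ∀ x : ZMod 2, x = 0 ∨ x = 1 := by decide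

lemma zmod2_solve : ∀ a b c : ZMod 2, a + b = c → a = c + b := by decide

/-- adjacency row vector of `u`, restricted to non-input columns -/
def avec (u : V) : {v : V // v ∉ I} → ZMod 2 := fun t => if G.Adj u t.val then 1 else 0

/-- standard basis row vector at `u` (zero if `u` is an input) -/
def evec (u : V) : {v : V // v ∉ I} → ZMod 2 := fun t => if t.val = u then 1 else 0

/-- generalized flow-matrix row for vertex `u` -/
def rvec (α β : V → ZMod 2) (u : V) : {v : V // v ∉ I} → ZMod 2 :=
  fun t => α u * avec G I u t + β u * evec I u t

def GoodRows (α β : V → ZMod 2) (O : Finset V) : Prop :=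
  ∀ u, u ∉ O → (¬ (α u = 0 ∧ β u = 0)) ∧ (β u ≠ 0 → u ∉ I)

def HasR (α β : V → ZMod 2) (O : Finset V) : Prop :=
  ∃ x : V → ({v : V // v ∉ I} → ZMod 2), ∀ u, u ∉ O → ∀ v, v ∉ O →
    (∑ t, rvec G I α β v t * x u t) = if v = u then 1 else 0

lemma card_subtype_filter (D : Finset V) (hD : ∀ s ∈ D, s ∉ I) :
    (Finset.univ.filter fun t : {v : V // v ∉ I} => t.val ∈ D).card = D.card := by
  apply Finset.card_bij (fun t _ => t.val)
  · intro a ha; exact (Finset.mem_filter.mp ha).2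
  · intro a _ b _ h; exact Subtype.ext h
  · intro b hb; exact ⟨⟨b, hD b hb⟩, Finset.mem_filter.mpr ⟨Finset.mem_univ _, hb⟩, rfl⟩

lemma odd_card_cast (n : ℕ) : ((n : ZMod 2) = if Odd n then 1 else 0) := by
  rcases Nat.even_or_odd n with h | h
  · rw [if_neg (Nat.not_odd_iff_even.mpr h)]
    exact (ZMod.natCast_eq_zero_iff _ _).mpr h.two_dvd
  · rw [if_pos h]
    obtain ⟨k, rfl⟩ := h
    push_cast
    have : (2 : ZMod 2) = 0 := by decide
    rw [this]; ring

lemma avec_dot (C : Finset V) (hC : ∀ s ∈ C, s ∉ I) (u : V) :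
    (∑ t, avec G I u t * (if t.val ∈ C then 1 else 0)) =
      if u ∈ Odds G C then 1 else 0 := by
  have h1 : ∀ t : {v : V // v ∉ I},
      avec G I u t * (if t.val ∈ C then 1 else 0) =
        if G.Adj u t.val ∧ t.val ∈ C then (1 : ZMod 2) else 0 := by
    intro t; simp only [avec, ite_and, ite_mul, one_mul, zero_mul]
  rw [Finset.sum_congr rfl fun t _ => h1 t, Finset.sum_boole]
  have h2 : (Finset.univ.filter fun t : {v : V // v ∉ I} => G.Adj u t.val ∧ t.val ∈ C).card
      = (C ∩ G.neighborFinset u).card := by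
    rw [show (Finset.univ.filter fun t : {v : V // v ∉ I} => G.Adj u t.val ∧ t.val ∈ C)
        = Finset.univ.filter fun t : {v : V // v ∉ I} => t.val ∈ C ∩ G.neighborFinset u by
      apply Finset.filter_congr; intro t _
      simp [SimpleGraph.mem_neighborFinset, and_comm]]
    exact card_subtype_filter I _ (fun s hs => hC s (Finset.mem_inter.mp hs).1)
  rw [h2, odd_card_cast]
  congr 1
  simp [Odds]

lemma evec_dot (C : Finset V) (hC : ∀ s ∈ C, s ∉ I) (u : V) :
    (∑ t, evec I u t * (if t.val ∈ C then 1 else 0)) = if u ∈ C then 1 else 0 := by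
  by_cases hu : u ∈ I
  · rw [if_neg (fun h => hC u h hu)]
    apply Finset.sum_eq_zero
    intro t _
    have : t.val ≠ u := fun h => t.2 (h ▸ hu)
    simp [evec, this]
  · rw [show (∑ t, evec I u t * (if t.val ∈ C then 1 else 0)) =
        ∑ t : {v : V // v ∉ I}, (if t = ⟨u, hu⟩ then (if t.val ∈ C then (1:ZMod 2) else 0) else 0) by
      apply Finset.sum_congr rfl; intro t _
      by_cases h : t = ⟨u, hu⟩
      · subst h; simp [evec]
      · have : t.val ≠ u := fun hv => h (Subtype.ext hv)
        simp [evec, this, h]]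
    rw [Finset.sum_ite_eq' Finset.univ (⟨u, hu⟩ : {v : V // v ∉ I})]
    simp

lemma evec_dot_vec (t : {v : V // v ∉ I}) (y : {v : V // v ∉ I} → ZMod 2) :
    (∑ s, evec I t.val s * y s) = y t := by
  rw [show (∑ s, evec I t.val s * y s) =
      ∑ s : {v : V // v ∉ I}, (if s = t then y s else 0) by
    apply Finset.sum_congr rfl; intro s _
    by_cases h : s = t
    · subst h; simp [evec]
    · have : s.val ≠ t.val := fun hv => h (Subtype.ext hv)
      simp [evec, this, h]]
  rw [Finset.sum_ite_eq' Finset.univ t]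
  simp

lemma rvec_dot (α β : V → ZMod 2) (C : Finset V) (hC : ∀ s ∈ C, s ∉ I) (v : V) :
    (∑ t, rvec G I α β v t * (if t.val ∈ C then 1 else 0)) =
      α v * (if v ∈ Odds G C then 1 else 0) + β v * (if v ∈ C then 1 else 0) := by
  simp only [rvec, add_mul, Finset.sum_add_distrib, mul_assoc, ← Finset.mul_sum]
  rw [avec_dot G I C hC, evec_dot I C hC]



/-- right inverse from injectivity of `vecMul` -/
lemma rinv_of_vecMul_inj {m n : Type} [Fintype m] [Fintype n] [DecidableEq m] [DecidableEq n]
    (B : Matrix m n (ZMod 2)) (h : Function.Injective B.vecMulLinear) :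
    ∃ X : Matrix n m (ZMod 2), B * X = 1 := by
  obtain ⟨g, hg⟩ := LinearMap.exists_leftInverse_of_injective B.vecMulLinear
    (LinearMap.ker_eq_bot.mpr h)
  refine ⟨(LinearMap.toMatrix' g)ᵀ, ?_⟩
  have h0 : B.vecMulLinear = Bᵀ.mulVecLin := (Matrix.mulVecLin_transpose B).symm
  have h1 : LinearMap.toMatrix' g * Bᵀ = 1 := by
    have := congrArg LinearMap.toMatrix' hg
    rw [h0, LinearMap.toMatrix'_comp, LinearMap.toMatrix'_id] at this
    rwa [show LinearMap.toMatrix' Bᵀ.mulVecLin = Bᵀ by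
      rw [← Matrix.toLin'_apply', LinearMap.toMatrix'_toLin']] at this
  have := congrArg Matrix.transpose h1
  rwa [Matrix.transpose_mul, Matrix.transpose_transpose, Matrix.transpose_one] at this

/-- if a finite family of vectors has trivial "orthogonal complement", it spans. -/
lemma span_eq_top_of_orth {κ η : Type} [Fintype κ] [Fintype η] [DecidableEq η]
    (f : κ → η → ZMod 2)
    (hker : ∀ y : η → ZMod 2, (∀ i, (∑ t, f i t * y t) = 0) → y = 0) :
    Submodule.span (ZMod 2) (Set.range f) = ⊤ := by
  set B : Matrix κ η (ZMod 2) := Matrix.of f with hB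
  have hinj : Function.Injective B.mulVecLin := by
    rw [← LinearMap.ker_eq_bot, LinearMap.ker_eq_bot']
    intro y hy
    apply hker
    intro i
    exact congrFun hy i
  have hrank : B.rank = Fintype.card η := by
    unfold Matrix.rank
    rw [LinearMap.finrank_range_of_inj hinj, Module.finrank_fintype_fun_eq_card]
  have htop : LinearMap.range Bᵀ.mulVecLin = ⊤ := by
    apply Submodule.eq_top_of_finrank_eq
    have : Bᵀ.rank = Fintype.card η := by rw [Matrix.rank_transpose]; exact hrank
    unfold Matrix.rank at this
    rw [this, Module.finrank_fintype_fun_eq_card]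
  have hle : (⊤ : Submodule (ZMod 2) (η → ZMod 2)) ≤ Submodule.span (ZMod 2) (Set.range f) := by
    rw [← htop, Matrix.mulVecLin_transpose, _root_.range_vecMulLinear]
    exact Submodule.span_mono (by rintro _ ⟨i, rfl⟩; exact ⟨i, rfl⟩)
  exact top_le_iff.mp hle

lemma sum_subtype_val (P : Finset V) (f : V → ZMod 2) (hf : ∀ u ∈ P, f u = 0) :
    (∑ u : {u : V // u ∉ P}, f u.val) = ∑ u : V, f u := by
  rw [← Finset.sum_subtype (Finset.univ.filter fun u => u ∉ P)
    (fun x => by simp) f]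
  exact Finset.sum_filter_of_ne (fun x _ hx => fun hP => hx (hf x hP))


section RO2
variable (G : SimpleGraph V) [DecidableRel G.Adj] (I : Finset V)

def rmat (α β : V → ZMod 2) (O : Finset V) :
    Matrix {u : V // u ∉ O} {v : V // v ∉ I} (ZMod 2) :=
  Matrix.of fun u t => rvec G I α β u.val t

lemma hasR_of_rinv (α β : V → ZMod 2) (O : Finset V)
    (hX : ∃ X : Matrix {v : V // v ∉ I} {u : V // u ∉ O} (ZMod 2), rmat G I α β O * X = 1) : HasR G I α β O := by
  obtain ⟨X, hX⟩ := hX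
  refine ⟨fun u => if h : u ∉ O then (fun t => X t ⟨u, h⟩) else 0, ?_⟩
  intro u hu v hv
  simp only [dif_pos hu]
  have := congrFun (congrFun hX ⟨v, hv⟩) ⟨u, hu⟩
  rw [Matrix.mul_apply, Matrix.one_apply] at this
  rw [show (∑ t, rvec G I α β v t * X t ⟨u, hu⟩) = ∑ t, rmat G I α β O ⟨v, hv⟩ t * X t ⟨u, hu⟩
    from rfl, this]
  simp [Subtype.ext_iff]

lemma hasR_rinv (α β : V → ZMod 2) (O : Finset V)
    (hinj : Function.Injective (rmat G I α β O).vecMulLinear) : HasR G I α β O :=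
  hasR_of_rinv G I α β O (rinv_of_vecMul_inj _ hinj)

end RO2

section Flow
variable (G : SimpleGraph V) [DecidableRel G.Adj] (I : Finset V)

def lα (lam : V → MLabel) : V → ZMod 2 := fun u =>
  if lam u = MLabel.Z ∨ lam u = MLabel.XZ ∨ lam u = MLabel.YZ then 0 else 1

def lβ (lam : V → MLabel) : V → ZMod 2 := fun u =>
  if lam u = MLabel.Z ∨ lam u = MLabel.XZ ∨ lam u = MLabel.YZ ∨ (lam u = MLabel.Y ∧ u ∉ I)
  then 1 else 0

variable {O : Finset V} {lam : V → MLabel} {c : V → Finset V} {prec : V → V → Prop}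

lemma flow_good (h : PauliFlow G I O lam c prec)
    (hlab : ∀ v ∈ I, lam v = MLabel.X ∨ lam v = MLabel.XY ∨ lam v = MLabel.Y) :
    GoodRows I (lα lam) (lβ I lam) O := by
  intro u _
  constructor
  · intro ⟨ha, hb⟩
    unfold lα at ha; unfold lβ at hb
    split_ifs at ha hb with h1 h2 <;> simp_all
  · intro hb hI
    rcases hlab u hI with h1 | h1 | h1 <;>
      simp [lβ, h1, hI] at hb

lemma flow_pair_diag (h : PauliFlow G I O lam c prec)
    (hlab : ∀ v ∈ I, lam v = MLabel.X ∨ lam v = MLabel.XY ∨ lam v = MLabel.Y)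
    (u : V) (hu : u ∉ O) :
    (∑ t, rvec G I (lα lam) (lβ I lam) u t * (if t.val ∈ c u then 1 else 0)) = 1 := by
  rw [rvec_dot G I _ _ (c u) (h.csub u hu) u]
  rcases hl : lam u with _ | _ | _ | _ | _ | _
  · -- X
    simp [lα, lβ, hl, h.P7 u hu hl]
  · -- Y
    by_cases hI : u ∈ I
    · have hnc : u ∉ c u := fun hc => h.csub u hu u hc hI
      rcases h.P9 u hu hl with ⟨hc, _⟩ | ⟨ho, _⟩
      · exact absurd hc hnc
      · simp [lα, lβ, hl, hI, ho, hnc]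
    · rcases h.P9 u hu hl with ⟨hc, ho⟩ | ⟨ho, hc⟩
      · simp [lα, lβ, hl, hI, ho, hc]
      · simp [lα, lβ, hl, hI, ho, hc]
  · -- Z
    simp [lα, lβ, hl, h.P8 u hu hl]
  · -- XY
    simp [lα, lβ, hl, (h.P4 u hu hl).2]
  · -- XZ
    simp [lα, lβ, hl, (h.P5 u hu hl).1]
  · -- YZ
    simp [lα, lβ, hl, (h.P6 u hu hl).1]

lemma flow_pair_off (h : PauliFlow G I O lam c prec)
    (hlab : ∀ v ∈ I, lam v = MLabel.X ∨ lam v = MLabel.XY ∨ lam v = MLabel.Y)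
    (u : V) (hu : u ∉ O) (v : V) (hv : v ∉ O) (hne : v ≠ u) (hnp : ¬ prec u v) :
    (∑ t, rvec G I (lα lam) (lβ I lam) v t * (if t.val ∈ c u then 1 else 0)) = 0 := by
  rw [rvec_dot G I _ _ (c u) (h.csub u hu) v]
  have hP1 : lam v ≠ MLabel.X → lam v ≠ MLabel.Y → v ∉ c u := fun h1 h2 hc =>
    hnp (h.P1 u hu v hc hv (Ne.symm hne) h1 h2)
  have hP2 : lam v ≠ MLabel.Y → lam v ≠ MLabel.Z → v ∉ Odds G (c u) := fun h1 h2 ho =>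
    hnp (h.P2 u hu v ho hv (Ne.symm hne) h1 h2)
  rcases hl : lam v with _ | _ | _ | _ | _ | _
  · -- X : adjacency row, not in Odds
    have := hP2 (by simp [hl]) (by simp [hl])
    simp [lα, lβ, hl, this]
  · -- Y
    have hiff := h.P3 u hu v hv hnp (Ne.symm hne) hl
    by_cases hI : v ∈ I
    · have hnc : v ∉ c u := fun hc => h.csub u hu v hc hI
      have hno : v ∉ Odds G (c u) := fun ho => hnc (hiff.mpr ho)
      simp [lα, lβ, hl, hI, hno]
    · by_cases hc : v ∈ c u
      · simp [lα, lβ, hl, hI, hc, hiff.mp hc]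
        decide
      · have hno : v ∉ Odds G (c u) := fun ho => hc (hiff.mpr ho)
        simp [lα, lβ, hl, hI, hc, hno]
  · -- Z
    have := hP1 (by simp [hl]) (by simp [hl])
    simp [lα, lβ, hl, this]
  · -- XY
    have := hP2 (by simp [hl]) (by simp [hl])
    simp [lα, lβ, hl, this]
  · -- XZ
    have := hP1 (by simp [hl]) (by simp [hl])
    simp [lα, lβ, hl, this]
  · -- YZ
    have := hP1 (by simp [hl]) (by simp [hl])
    simp [lα, lβ, hl, this]

lemma flow_hasR (h : PauliFlow G I O lam c prec)
    (hlab : ∀ v ∈ I, lam v = MLabel.X ∨ lam v = MLabel.XY ∨ lam v = MLabel.Y) :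
    HasR G I (lα lam) (lβ I lam) O := by
  apply hasR_rinv
  rw [← LinearMap.ker_eq_bot, LinearMap.ker_eq_bot']
  intro z hz
  by_contra hz0
  -- find a maximal element of the support of z
  haveI : IsTrans {u : V // u ∉ O} (fun a b => prec b.val a.val) :=
    ⟨fun a b c hab hbc => h.trans _ _ _ hbc hab⟩
  haveI : IsIrrefl {u : V // u ∉ O} (fun a b => prec b.val a.val) :=
    ⟨fun a => h.irrefl a.val⟩
  obtain ⟨m, hmS, hmin⟩ := (Finite.wellFounded_of_trans_of_irrefl
    (fun a b : {u : V // u ∉ O} => prec b.val a.val)).has_min {u | z u ≠ 0}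
    (Function.ne_iff.mp hz0)
  have hmin' : ∀ x : {u : V // u ∉ O}, z x ≠ 0 → ¬ prec m.val x.val := fun x hx => hmin x hx
  -- pair the vanishing row combination with the correction set of m
  have hzv : ∀ t, (∑ u : {u : V // u ∉ O}, z u * rvec G I (lα lam) (lβ I lam) u.val t) = 0 :=
    fun t => congrFun hz t
  have key : (∑ u : {u : V // u ∉ O}, z u *
      (∑ t, rvec G I (lα lam) (lβ I lam) u.val t * (if t.val ∈ c m.val then 1 else 0))) = 0 := by
    have swap : (∑ u : {u : V // u ∉ O}, z u *
        (∑ t, rvec G I (lα lam) (lβ I lam) u.val t * (if t.val ∈ c m.val then 1 else 0)))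
        = ∑ t, (∑ u : {u : V // u ∉ O}, z u * rvec G I (lα lam) (lβ I lam) u.val t) *
            (if t.val ∈ c m.val then 1 else 0) := by
      simp only [Finset.mul_sum, Finset.sum_mul]
      rw [Finset.sum_comm]
      apply Finset.sum_congr rfl; intro t _
      apply Finset.sum_congr rfl; intro u _
      ring
    rw [swap]
    apply Finset.sum_eq_zero; intro t _
    rw [hzv t, zero_mul]
  rw [Finset.sum_eq_single m] at key
  · rw [flow_pair_diag G I h hlab m.val m.2, mul_one] at key
    exact hmS key
  · intro b _ hbm
    by_cases hzb : z b = 0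
    · rw [hzb, zero_mul]
    · rw [flow_pair_off G I h hlab m.val m.2 b.val b.2
        (fun hval => hbm (Subtype.ext hval)) (hmin' b hzb), mul_zero]
  · intro hm; exact absurd (Finset.mem_univ m) hm

end Flow

section FlowOf
variable (G : SimpleGraph V) [DecidableRel G.Adj] (I : Finset V)

lemma flow_of_hasR (O : Finset V) (α β : V → ZMod 2)
    (hG : GoodRows I α β O) (hR : HasR G I α β O) :
    ∃ lam' : V → MLabel, (∀ v ∈ I, v ∉ O → lam' v = MLabel.X) ∧
      ∃ (c' : V → Finset V) (prec' : V → V → Prop), PauliFlow G I O lam' c' prec' := by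
  classical
  obtain ⟨x, hx⟩ := hR
  set lam' : V → MLabel := fun v =>
    if β v = 0 then MLabel.X else if α v = 0 then MLabel.Z else MLabel.Y with hlam'
  set c' : V → Finset V := fun u =>
    ((Finset.univ : Finset {v : V // v ∉ I}).filter fun t => x u t = 1).image Subtype.val
    with hc'
  have hCI : ∀ u, ∀ s ∈ c' u, s ∉ I := by
    intro u s hs
    obtain ⟨t, _, rfl⟩ := Finset.mem_image.mp hs
    exact t.2
  have hBR : ∀ u, ∀ t : {v : V // v ∉ I},
      (if t.val ∈ c' u then (1 : ZMod 2) else 0) = x u t := by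
    intro u t
    by_cases h : x u t = 1
    · rw [h, if_pos]
      exact Finset.mem_image.mpr ⟨t, Finset.mem_filter.mpr ⟨Finset.mem_univ _, h⟩, rfl⟩
    · have h0 : x u t = 0 := (zmod2_cases (x u t)).resolve_right h
      rw [h0, if_neg]
      intro hmem
      obtain ⟨t', ht', hval⟩ := Finset.mem_image.mp hmem
      rw [Subtype.ext hval] at ht'
      exact h (Finset.mem_filter.mp ht').2
  have key : ∀ u, u ∉ O → ∀ v, v ∉ O →
      α v * (if v ∈ Odds G (c' u) then 1 else 0) + β v * (if v ∈ c' u then 1 else 0)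
        = if v = u then 1 else 0 := by
    intro u hu v hv
    rw [← rvec_dot G I α β (c' u) (hCI u) v]
    rw [Finset.sum_congr rfl fun t _ => by rw [hBR u t]]
    exact hx u hu v hv
  -- basic label facts
  have hlamX : ∀ v, lam' v = MLabel.X → β v = 0 := by
    intro v hv
    replace hv : (if β v = 0 then MLabel.X else if α v = 0 then MLabel.Z else MLabel.Y)
      = MLabel.X := hv
    by_contra hb
    simp only [if_neg hb] at hv
    split_ifs at hv <;> exact MLabel.noConfusion hv
  have hlamZ : ∀ v, lam' v = MLabel.Z → β v ≠ 0 ∧ α v = 0 := by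
    intro v hv
    replace hv : (if β v = 0 then MLabel.X else if α v = 0 then MLabel.Z else MLabel.Y)
      = MLabel.Z := hv
    by_cases hb : β v = 0
    · simp only [if_pos hb] at hv; exact MLabel.noConfusion hv
    · refine ⟨hb, ?_⟩
      by_contra ha
      simp only [if_neg hb, if_neg ha] at hv
      exact MLabel.noConfusion hv
  have hlamY : ∀ v, lam' v = MLabel.Y → β v ≠ 0 ∧ α v ≠ 0 := by
    intro v hv
    replace hv : (if β v = 0 then MLabel.X else if α v = 0 then MLabel.Z else MLabel.Y)
      = MLabel.Y := hv
    by_cases hb : β v = 0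
    · simp only [if_pos hb] at hv; exact MLabel.noConfusion hv
    · by_cases ha : α v = 0
      · simp only [if_neg hb, if_pos ha] at hv; exact MLabel.noConfusion hv
      · exact ⟨hb, ha⟩
  have hnotother : ∀ v m, lam' v = m →
      m ≠ MLabel.XY ∧ m ≠ MLabel.XZ ∧ m ≠ MLabel.YZ := by
    intro v m hv
    replace hv : (if β v = 0 then MLabel.X else if α v = 0 then MLabel.Z else MLabel.Y)
      = m := hv
    split_ifs at hv <;> subst hv <;> exact ⟨MLabel.noConfusion, MLabel.noConfusion,
      MLabel.noConfusion⟩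
  have hone : ∀ a : ZMod 2, a ≠ 0 → a = 1 := fun a ha => (zmod2_cases a).resolve_left ha
  refine ⟨lam', ?_, c', fun _ _ => False, ?_⟩
  · intro v hvI hvO
    have hb : β v = 0 := by
      by_contra hb
      exact (hG v hvO).2 hb hvI
    show (if β v = 0 then MLabel.X else if α v = 0 then MLabel.Z else MLabel.Y) = MLabel.X
    rw [if_pos hb]
  constructor
  · intro u hu; exact hu
  · intro u v w h _; exact h.elim
  · -- csub
    intro u _ v hv; exact hCI u v hv
  · -- P1
    intro u hu v hvc hv hne hX hY
    have hb : β v ≠ 0 := fun hb => hX (show (if β v = 0 then MLabel.X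
      else if α v = 0 then MLabel.Z else MLabel.Y) = MLabel.X by rw [if_pos hb])
    have ha : α v = 0 := by
      by_contra ha
      exact hY (show (if β v = 0 then MLabel.X
        else if α v = 0 then MLabel.Z else MLabel.Y) = MLabel.Y by rw [if_neg hb, if_neg ha])
    have := key u hu v hv
    rw [ha, if_neg (fun h : v = u => hne h.symm), if_pos hvc, hone _ hb] at this
    simpa using this
  · -- P2
    intro u hu v hvo hv hne hY hZ
    have hb : β v = 0 := by
      by_contra hb
      by_cases ha : α v = 0
      · exact hZ (show (if β v = 0 then MLabel.X
          else if α v = 0 then MLabel.Z else MLabel.Y) = MLabel.Z by rw [if_neg hb, if_pos ha])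
      · exact hY (show (if β v = 0 then MLabel.X
          else if α v = 0 then MLabel.Z else MLabel.Y) = MLabel.Y by rw [if_neg hb, if_neg ha])
    have ha : α v = 1 := hone _ (fun ha => (hG v hv).1 ⟨ha, hb⟩)
    have := key u hu v hv
    rw [ha, hb, if_neg (fun h : v = u => hne h.symm), if_pos hvo] at this
    simpa using this
  · -- P3
    intro u hu v hv _ hne hY
    obtain ⟨hb, ha⟩ := hlamY v hY
    have := key u hu v hv
    rw [hone _ ha, hone _ hb, if_neg (fun h : v = u => hne h.symm)] at this
    constructor
    · intro hc
      by_contra ho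
      rw [if_pos hc, if_neg ho] at this
      simpa using this
    · intro ho
      by_contra hc
      rw [if_pos ho, if_neg hc] at this
      simpa using this
  · -- P4
    intro u _ hXY
    exact absurd rfl (hnotother u _ hXY).1
  · -- P5
    intro u _ hXZ
    exact absurd rfl (hnotother u _ hXZ).2.1
  · -- P6
    intro u _ hYZ
    exact absurd rfl (hnotother u _ hYZ).2.2
  · -- P7
    intro u hu hX
    have hb : β u = 0 := hlamX u hX
    have ha : α u = 1 := hone _ (fun ha => (hG u hu).1 ⟨ha, hb⟩)
    have := key u hu u hu
    rw [ha, hb, if_pos rfl] at this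
    by_contra ho
    rw [if_neg ho] at this
    simpa using this
  · -- P8
    intro u hu hZ
    obtain ⟨hb, ha⟩ := hlamZ u hZ
    have := key u hu u hu
    rw [ha, hone _ hb, if_pos rfl] at this
    by_contra hc
    rw [if_neg hc] at this
    simpa using this
  · -- P9
    intro u hu hY
    obtain ⟨hb, ha⟩ := hlamY u hY
    have := key u hu u hu
    rw [hone _ ha, hone _ hb, if_pos rfl] at this
    by_cases hc : u ∈ c' u <;> by_cases ho : u ∈ Odds G (c' u)
    · rw [if_pos hc, if_pos ho] at this; exfalso; simpa using this
    · exact Or.inl ⟨hc, ho⟩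
    · exact Or.inr ⟨ho, hc⟩
    · rw [if_neg hc, if_neg ho] at this; exfalso; simpa using this

end FlowOf

section Step
variable (G : SimpleGraph V) [DecidableRel G.Adj] (I : Finset V)

lemma step_ext (O : Finset V) (α β : V → ZMod 2) (hG : GoodRows I α β O)
    (hR : HasR G I α β O) (v : V) (hvO : v ∈ O) (hvI : v ∉ I) (a b : ZMod 2)
    (hab : ¬ (a = 0 ∧ b = 0))
    (hρ : (fun t => a * avec G I v t + b * evec I v t) ∉ Submodule.span (ZMod 2)
      (Set.range fun u : {u : V // u ∉ O} => rvec G I α β u.val)) :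
    GoodRows I (Function.update α v a) (Function.update β v b) (O.erase v) ∧
      HasR G I (Function.update α v a) (Function.update β v b) (O.erase v) := by
  classical
  have hrv : ∀ u, u ≠ v →
      rvec G I (Function.update α v a) (Function.update β v b) u = rvec G I α β u := by
    intro u hu; funext t; simp [rvec, Function.update_of_ne hu]
  have hrvv : rvec G I (Function.update α v a) (Function.update β v b) v
      = fun t => a * avec G I v t + b * evec I v t := by
    funext t; simp [rvec, Function.update_self]
  constructor
  · intro u hu
    by_cases huv : u = v
    · subst huv
      constructor
      · simpa [Function.update_self] using hab
      · intro _; exact hvI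
    · have huO : u ∉ O := fun h => hu (Finset.mem_erase.mpr ⟨huv, h⟩)
      constructor
      · simpa [Function.update_of_ne huv] using (hG u huO).1
      · intro hb; exact (hG u huO).2 (by simpa [Function.update_of_ne huv] using hb)
  · obtain ⟨x, hx⟩ := hR
    apply hasR_rinv
    rw [← LinearMap.ker_eq_bot, LinearMap.ker_eq_bot']
    intro z hz
    have hzt : ∀ t, (∑ u : {u : V // u ∉ O.erase v}, z u *
        rvec G I (Function.update α v a) (Function.update β v b) u.val t) = 0 :=
      fun t => congrFun hz t
    set z' : V → ZMod 2 := fun u => if h : u ∉ O.erase v then z ⟨u, h⟩ else 0 with hz'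
    set z₀ : V → ZMod 2 := fun u => if u = v then 0 else z' u with hz₀
    have hzt' : ∀ t, (∑ u : V, z' u *
        rvec G I (Function.update α v a) (Function.update β v b) u t) = 0 := by
      intro t
      rw [← sum_subtype_val (O.erase v) _
        (fun u hu => by rw [show z' u = 0 from dif_neg (not_not_intro hu), zero_mul])]
      rw [← hzt t]
      apply Finset.sum_congr rfl; intro u _
      congr 1
      exact dif_pos u.2
    have hsplit : ∀ t, z' v * (a * avec G I v t + b * evec I v t)
        + (∑ u : V, z₀ u * rvec G I α β u t) = 0 := by
      intro t
      have e1 := Finset.add_sum_erase Finset.univ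
        (fun u => z' u * rvec G I (Function.update α v a) (Function.update β v b) u t)
        (Finset.mem_univ v)
      have e2 := Finset.add_sum_erase Finset.univ (fun u => z₀ u * rvec G I α β u t)
        (Finset.mem_univ v)
      have hsame : (∑ u ∈ Finset.univ.erase v,
          z' u * rvec G I (Function.update α v a) (Function.update β v b) u t)
          = ∑ u ∈ Finset.univ.erase v, z₀ u * rvec G I α β u t := by
        apply Finset.sum_congr rfl; intro u hu
        have huv : u ≠ v := (Finset.mem_erase.mp hu).1
        rw [congrFun (hrv u huv) t, show z₀ u = z' u from if_neg huv]
      have hv0 : z₀ v * rvec G I α β v t = 0 := by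
        rw [show z₀ v = 0 from if_pos rfl, zero_mul]
      calc z' v * (a * avec G I v t + b * evec I v t)
          + (∑ u : V, z₀ u * rvec G I α β u t)
          = z' v * (a * avec G I v t + b * evec I v t)
            + (z₀ v * rvec G I α β v t + ∑ u ∈ Finset.univ.erase v, z₀ u * rvec G I α β u t) := by
            rw [e2]
        _ = z' v * rvec G I (Function.update α v a) (Function.update β v b) v t
            + ∑ u ∈ Finset.univ.erase v,
              z' u * rvec G I (Function.update α v a) (Function.update β v b) u t := by
            rw [hv0, zero_add, congrFun hrvv t, hsame]
        _ = 0 := by rw [e1]; exact hzt' t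
    have hz₀O : ∀ u ∈ O, z₀ u = 0 := by
      intro u hu
      by_cases huv : u = v
      · subst huv; exact if_pos rfl
      · have hmem : u ∈ O.erase v := Finset.mem_erase.mpr ⟨huv, hu⟩
        rw [show z₀ u = z' u from if_neg huv]
        exact dif_neg (not_not_intro hmem)
    rcases zmod2_cases (z' v) with hzv | hzv
    · -- new coefficient is zero; use the old right inverse to kill the rest
      have hzero : ∀ t, (∑ u : V, z₀ u * rvec G I α β u t) = 0 := by
        intro t; have := hsplit t; rwa [hzv, zero_mul, zero_add] at this
      have hz₀all : ∀ u₀, u₀ ∉ O → z₀ u₀ = 0 := by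
        intro u₀ hu₀
        have hp : (∑ t, (∑ u : V, z₀ u * rvec G I α β u t) * x u₀ t) = 0 :=
          Finset.sum_eq_zero fun t _ => by rw [hzero t, zero_mul]
        rw [show (∑ t, (∑ u : V, z₀ u * rvec G I α β u t) * x u₀ t)
            = ∑ u : V, z₀ u * (∑ t, rvec G I α β u t * x u₀ t) by
          simp only [Finset.sum_mul, Finset.mul_sum]
          rw [Finset.sum_comm]
          exact Finset.sum_congr rfl fun u _ => Finset.sum_congr rfl fun t _ => by ring] at hp
        rw [Finset.sum_eq_single u₀] at hp
        · rwa [hx u₀ hu₀ u₀ hu₀, if_pos rfl, mul_one] at hp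
        · intro b' _ hb'
          by_cases hbO : b' ∈ O
          · rw [hz₀O b' hbO, zero_mul]
          · rw [hx u₀ hu₀ b' hbO, if_neg hb', mul_zero]
        · intro hm; exact absurd (Finset.mem_univ u₀) hm
      funext u
      show z u = 0
      have hzu : z' u.val = z u := by
        simp only [hz']
        rw [dif_pos u.2]
      rw [← hzu]
      by_cases huv : u.val = v
      · rw [huv]; exact hzv
      · have huO : u.val ∉ O := fun h => u.2 (Finset.mem_erase.mpr ⟨huv, h⟩)
        rw [show z' u.val = z₀ u.val from (if_neg huv).symm]
        exact hz₀all u.val huO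
    · -- new coefficient is one : contradiction with hρ
      exfalso
      apply hρ
      have hrep : (fun t => a * avec G I v t + b * evec I v t)
          = ∑ u : V, z₀ u • rvec G I α β u := by
        funext t
        rw [Finset.sum_apply]
        simp only [Pi.smul_apply, smul_eq_mul]
        have := hsplit t
        rw [hzv, one_mul] at this
        rw [zmod2_solve _ _ _ this, zero_add]
      rw [hrep]
      apply Submodule.sum_mem
      intro u _
      by_cases huO : u ∈ O
      · rw [hz₀O u huO, zero_smul]
        exact Submodule.zero_mem _
      · exact Submodule.smul_mem _ _ (Submodule.subset_span ⟨⟨u, huO⟩, rfl⟩)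

lemma step (O : Finset V) (hIO : I ∩ O = ∅) (hcard : I.card < O.card)
    (α β : V → ZMod 2) (hG : GoodRows I α β O) (hR : HasR G I α β O) :
    ∃ v ∈ O, ∃ α' β' : V → ZMod 2,
      GoodRows I α' β' (O.erase v) ∧ HasR G I α' β' (O.erase v) := by
  classical
  have hone : ∀ a : ZMod 2, a ≠ 0 → a = 1 := fun a ha => (zmod2_cases a).resolve_left ha
  obtain ⟨x, hx⟩ := hR
  set W : Submodule (ZMod 2) ({v : V // v ∉ I} → ZMod 2) :=
    Submodule.span (ZMod 2) (Set.range fun u : {u : V // u ∉ O} => rvec G I α β u.val) with hW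
  have claim : ∃ v ∈ O, (avec G I v ∉ W ∨ evec I v ∉ W) := by
    by_contra hall
    push_neg at hall
    set f : ({u : V // u ∉ O} ⊕ ({v : V // v ∈ O} ⊕ {v : V // v ∈ O})) →
        ({v : V // v ∉ I} → ZMod 2) :=
      Sum.elim (fun u => rvec G I α β u.val)
        (Sum.elim (fun v => avec G I v.val) (fun v => evec I v.val)) with hf
    have hker : ∀ y : {v : V // v ∉ I} → ZMod 2, (∀ i, (∑ t, f i t * y t) = 0) → y = 0 := by
      intro y hy
      have hrow : ∀ u, u ∉ O → (∑ t, rvec G I α β u t * y t) = 0 :=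
        fun u hu => hy (Sum.inl ⟨u, hu⟩)
      have hA : ∀ v, v ∈ O → (∑ t, avec G I v t * y t) = 0 :=
        fun v hv => hy (Sum.inr (Sum.inl ⟨v, hv⟩))
      have hEO : ∀ t : {v : V // v ∉ I}, t.val ∈ O → y t = 0 := by
        intro t ht
        have h0 : (∑ s, evec I t.val s * y s) = 0 := hy (Sum.inr (Sum.inr ⟨t.val, ht⟩))
        rwa [evec_dot_vec] at h0
      by_contra hy0
      obtain ⟨w, hw⟩ := Function.ne_iff.mp hy0
      have hsupp : ∀ t : {v : V // v ∉ I}, y t ≠ 0 → t.val ∉ O ∧ α t.val = 1 := by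
        intro t hyt
        have htO : t.val ∉ O := fun h => hyt (hEO t h)
        refine ⟨htO, ?_⟩
        rcases zmod2_cases (α t.val) with ha | ha
        · exfalso
          have hb : β t.val = 1 := by
            rcases zmod2_cases (β t.val) with hb | hb
            · exact absurd ⟨ha, hb⟩ (hG t.val htO).1
            · exact hb
          have h0 := hrow t.val htO
          rw [show (∑ s, rvec G I α β t.val s * y s) = ∑ s, evec I t.val s * y s from
            Finset.sum_congr rfl fun s _ => by simp [rvec, ha, hb], evec_dot_vec] at h0
          exact hyt h0
        · exact ha
      obtain ⟨hwO, hαw⟩ := hsupp w (by simpa using hw)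
      have hyw : y w = 1 := hone _ (by simpa using hw)
      set xw : {v : V // v ∉ I} → ZMod 2 := x w.val with hxwdef
      have hxdiag : ∀ v', v' ∉ O → (∑ t, rvec G I α β v' t * xw t)
          = if v' = w.val then 1 else 0 := fun v' hv' => hx w.val hwO v' hv'
      have E1 : (∑ t, y t * (∑ s, avec G I t.val s * xw s))
          = ∑ s, xw s * (∑ t, avec G I s.val t * y t) := by
        simp only [Finset.mul_sum]
        rw [Finset.sum_comm]
        apply Finset.sum_congr rfl; intro s _
        apply Finset.sum_congr rfl; intro t _
        have hadj : avec G I t.val s = avec G I s.val t := by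
          simp only [avec]
          congr 1
          · rw [G.adj_comm]
        rw [hadj]; ring
      have PT1 : ∀ t : {v : V // v ∉ I}, y t * (∑ s, avec G I t.val s * xw s)
          = y t * ((if t = w then 1 else 0) + β t.val * xw t) := by
        intro t
        rcases zmod2_cases (y t) with h0 | h1
        · rw [h0, zero_mul, zero_mul]
        · obtain ⟨htO, hαt⟩ := hsupp t (by rw [h1]; exact one_ne_zero)
          congr 1
          have hr := hxdiag t.val htO
          have hexp : (∑ s, rvec G I α β t.val s * xw s)
              = α t.val * (∑ s, avec G I t.val s * xw s)
                + β t.val * (∑ s, evec I t.val s * xw s) := by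
            simp only [rvec, add_mul, Finset.sum_add_distrib, mul_assoc, ← Finset.mul_sum]
          rw [hexp, hαt, one_mul, evec_dot_vec] at hr
          rw [zmod2_solve _ _ _ hr]
          congr 1
          simp [Subtype.ext_iff]
      have PT2 : ∀ s : {v : V // v ∉ I}, xw s * (∑ t, avec G I s.val t * y t)
          = xw s * (β s.val * y s) := by
        intro s
        by_cases hsO : s.val ∈ O
        · rw [hA s.val hsO, hEO s hsO, mul_zero, mul_zero, mul_zero]
        · rcases zmod2_cases (α s.val) with ha | ha
          · have hb : β s.val = 1 := by
              rcases zmod2_cases (β s.val) with hb | hb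
              · exact absurd ⟨ha, hb⟩ (hG s.val hsO).1
              · exact hb
            have hxs : xw s = if s.val = w.val then 1 else 0 := by
              have hr := hxdiag s.val hsO
              rwa [show (∑ u, rvec G I α β s.val u * xw u) = ∑ u, evec I s.val u * xw u from
                Finset.sum_congr rfl fun u _ => by simp [rvec, ha, hb], evec_dot_vec] at hr
            have hne : s.val ≠ w.val := by
              intro h
              rw [h, hαw] at ha
              exact (one_ne_zero (α := ZMod 2)) ha
            rw [hxs, if_neg hne, zero_mul, zero_mul]
          · congr 1
            have hr := hrow s.val hsO
            have hexp : (∑ t, rvec G I α β s.val t * y t)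
                = α s.val * (∑ t, avec G I s.val t * y t)
                  + β s.val * (∑ t, evec I s.val t * y t) := by
              simp only [rvec, add_mul, Finset.sum_add_distrib, mul_assoc, ← Finset.mul_sum]
            rw [hexp, ha, one_mul, evec_dot_vec] at hr
            rw [zmod2_solve _ _ _ hr, zero_add]
      have final1 : (∑ t, y t * (∑ s, avec G I t.val s * xw s))
          = 1 + ∑ t, y t * (β t.val * xw t) := by
        rw [Finset.sum_congr rfl fun t _ => PT1 t]
        simp only [mul_add]
        rw [Finset.sum_add_distrib]
        congr 1
        rw [show (∑ t, y t * if t = w then 1 else 0)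
            = ∑ t : {v : V // v ∉ I}, (if t = w then y t else 0) from
          Finset.sum_congr rfl fun t _ => by split_ifs <;> simp]
        rw [Finset.sum_ite_eq' Finset.univ w y, if_pos (Finset.mem_univ w), hyw]
      have final2 : (∑ s, xw s * (∑ t, avec G I s.val t * y t))
          = ∑ t, y t * (β t.val * xw t) := by
        rw [Finset.sum_congr rfl fun s _ => PT2 s]
        apply Finset.sum_congr rfl; intro t _; ring
      rw [E1, final2] at final1
      exact one_ne_zero (right_eq_add.mp final1)
    have hspan := span_eq_top_of_orth f hker
    have hWtop : W = ⊤ := by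
      have hle : Submodule.span (ZMod 2) (Set.range f) ≤ W := by
        rw [Submodule.span_le]
        rintro _ ⟨i, rfl⟩
        rcases i with u | (v | v)
        · exact Submodule.subset_span ⟨u, rfl⟩
        · exact (hall v.val v.2).1
        · exact (hall v.val v.2).2
      rw [hspan] at hle
      exact top_le_iff.mp hle
    -- dimension contradiction
    have h1 : Module.finrank (ZMod 2) W ≤ Fintype.card {u : V // u ∉ O} := by
      have hWr : W = LinearMap.range (rmat G I α β O).vecMulLinear := by
        rw [range_vecMulLinear]
        rfl
      rw [hWr]
      calc Module.finrank (ZMod 2) (LinearMap.range (rmat G I α β O).vecMulLinear)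
          ≤ Module.finrank (ZMod 2) ({u : V // u ∉ O} → ZMod 2) :=
            LinearMap.finrank_range_le _
        _ = Fintype.card {u : V // u ∉ O} := Module.finrank_fintype_fun_eq_card _
    have h2 : Module.finrank (ZMod 2) W = Fintype.card {v : V // v ∉ I} := by
      rw [hWtop, finrank_top, Module.finrank_fintype_fun_eq_card]
    have hlt : Fintype.card {u : V // u ∉ O} < Fintype.card {v : V // v ∉ I} := by
      have e1 : Fintype.card {u : V // u ∉ O} = Fintype.card V - O.card := by
        rw [Fintype.card_subtype_compl, Fintype.card_coe]
      have e2 : Fintype.card {v : V // v ∉ I} = Fintype.card V - I.card := by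
        rw [Fintype.card_subtype_compl, Fintype.card_coe]
      have hO : O.card ≤ Fintype.card V := by
        rw [← Finset.card_univ]; exact Finset.card_le_univ O
      omega
    omega
  obtain ⟨v, hvO, hcand⟩ := claim
  have hvI : v ∉ I := by
    intro hv
    rw [Finset.eq_empty_iff_forall_notMem] at hIO
    exact hIO v (Finset.mem_inter.mpr ⟨hv, hvO⟩)
  rcases hcand with hc | hc
  · have hρ : (fun t => (1 : ZMod 2) * avec G I v t + 0 * evec I v t) ∉ W := by
      have : (fun t => (1 : ZMod 2) * avec G I v t + 0 * evec I v t) = avec G I v := by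
        funext t; ring
      rw [this]; exact hc
    obtain ⟨hg, hr⟩ := step_ext G I O α β hG ⟨x, hx⟩ v hvO hvI 1 0 (by simp) hρ
    exact ⟨v, hvO, _, _, hg, hr⟩
  · have hρ : (fun t => (0 : ZMod 2) * avec G I v t + 1 * evec I v t) ∉ W := by
      have : (fun t => (0 : ZMod 2) * avec G I v t + 1 * evec I v t) = evec I v := by
        funext t; ring
      rw [this]; exact hc
    obtain ⟨hg, hr⟩ := step_ext G I O α β hG ⟨x, hx⟩ v hvO hvI 0 1 (by simp) hρ
    exact ⟨v, hvO, _, _, hg, hr⟩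

end Step

section Descend
variable (G : SimpleGraph V) [DecidableRel G.Adj] (I : Finset V)

lemma descend : ∀ (k : ℕ) (O : Finset V), I ∩ O = ∅ → O.card = I.card + k →
    (∃ α β : V → ZMod 2, GoodRows I α β O ∧ HasR G I α β O) →
    ∃ O' ⊆ O, O'.card = I.card ∧
      ∃ α' β' : V → ZMod 2, GoodRows I α' β' O' ∧ HasR G I α' β' O' := by
  intro k
  induction k with
  | zero =>
    intro O hIO hcard hdata
    exact ⟨O, Finset.Subset.refl O, by omega, hdata⟩
  | succ k ih =>
    intro O hIO hcard hdata
    obtain ⟨α, β, hG, hR⟩ := hdata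
    obtain ⟨v, hvO, α', β', hG', hR'⟩ := step G I O hIO (by omega) α β hG hR
    have hIOe : I ∩ O.erase v = ∅ := by
      rw [Finset.eq_empty_iff_forall_notMem] at hIO ⊢
      intro u hu
      rw [Finset.mem_inter] at hu
      exact hIO u (Finset.mem_inter.mpr ⟨hu.1, Finset.mem_of_mem_erase hu.2⟩)
    have hce : (O.erase v).card = I.card + k := by
      rw [Finset.card_erase_of_mem hvO]; omega
    obtain ⟨O', hO'sub, hO'card, hdata'⟩ := ih (O.erase v) hIOe hce ⟨α', β', hG', hR'⟩
    exact ⟨O', hO'sub.trans (Finset.erase_subset v O), hO'card, hdata'⟩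

end Descend

/-- If a labelled open graph with `I ∩ O = ∅` has a Pauli flow and more outputs
than inputs, then some subset `O' ⊆ O` with `|O'| = |I|` admits a labelling with
Pauli flow. -/
theorem reduce_outputs (G : SimpleGraph V) [DecidableRel G.Adj]
    (I O : Finset V) (hIO : I ∩ O = ∅) (lam : V → MLabel)
    (hlab : ∀ v ∈ I, lam v = MLabel.X ∨ lam v = MLabel.XY ∨ lam v = MLabel.Y)
    (c : V → Finset V) (prec : V → V → Prop)
    (h : PauliFlow G I O lam c prec) (hcard : I.card < O.card) :
    ∃ O' ⊆ O, O'.card = I.card ∧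
      ∃ lam' : V → MLabel,
        (∀ v ∈ I, v ∉ O' → lam' v = MLabel.X ∨ lam' v = MLabel.XY ∨ lam' v = MLabel.Y) ∧
        ∃ (c' : V → Finset V) (prec' : V → V → Prop),
          PauliFlow G I O' lam' c' prec' := by
  have hdata : ∃ α β : V → ZMod 2, GoodRows I α β O ∧ HasR G I α β O :=
    ⟨lα lam, lβ I lam, flow_good G I h hlab, flow_hasR G I h hlab⟩
  obtain ⟨O', hO'sub, hO'card, α', β', hG', hR'⟩ :=
    descend G I (O.card - I.card) O hIO (by omega) hdata
  obtain ⟨lam', hlam', c', prec', hflow⟩ := flow_of_hasR G I O' α' β' hG' hR'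
  exact ⟨O', hO'sub, hO'card, lam', fun v hvI hvO' => Or.inl (hlam' v hvI hvO'), c', prec', hflow⟩
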